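/- Let O be a 2×2 orthogonal complex matrix. Then the holant clone of the holographically transformed set equals the holographic transform of the holant clone: ⟨O∘F⟩_H = O∘⟨F⟩_H, for any set F of Boolean-input complex-valued functions. -/

import Mathlib

/-- A Boolean-input complex-valued function together with its arity. -/
abbrev Fn : Type := Σ n : ℕ, (Fin n → Bool) → ℂ

/-- The holant clone generated by `F`: the closure of `F` under tensor product,
permutation of arguments, and contraction of the last two arguments. -/
inductive HClone (F : Set Fn) : Fn → Prop
  | base {f : Fn} : f ∈ F → HClone F f
  | tensor {k l : ℕ} {f : (Fin k → Bool) → ℂ} {g : (Fin l → Bool) → ℂ} :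
      HClone F ⟨k, f⟩ → HClone F ⟨l, g⟩ →
      HClone F ⟨k + l, fun x => f (fun i => x (Fin.castAdd l i)) *
        g (fun j => x (Fin.natAdd k j))⟩
  | perm {k : ℕ} {f : (Fin k → Bool) → ℂ} (π : Equiv.Perm (Fin k)) :
      HClone F ⟨k, f⟩ → HClone F ⟨k, fun x => f (fun i => x (π i))⟩
  | contract {k : ℕ} {f : (Fin (k + 2) → Bool) → ℂ} :
      HClone F ⟨k + 2, f⟩ →
      HClone F ⟨k, fun x => ∑ y : Bool, f (Fin.snoc (Fin.snoc x y) y)⟩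

/-- Holographic transformation of a function (with its arity) by a 2×2 matrix
(rows/columns indexed by `Bool`, with `false = 0`, `true = 1`):
`(O∘f)(x) = Σ_z f(z) ∏_j O_{x_j z_j}`. -/
noncomputable def htransFn (O : Bool → Bool → ℂ) (p : Fn) : Fn :=
  ⟨p.1, fun x => ∑ z : Fin p.1 → Bool, p.2 z * ∏ j, O (x j) (z j)⟩

/-- The snoc equivalence. -/
def eSnoc (n : ℕ) : ((Fin n → Bool) × Bool) ≃ (Fin (n + 1) → Bool) where
  toFun p := Fin.snoc p.1 p.2
  invFun z := (fun i => z i.castSucc, z (Fin.last n))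
  left_inv := by rintro ⟨w, a⟩; simp
  right_inv := fun z => Fin.snoc_init_self z

lemma ht_tensor (O : Bool → Bool → ℂ) {k l : ℕ} (f : (Fin k → Bool) → ℂ)
    (g : (Fin l → Bool) → ℂ) :
    htransFn O ⟨k + l, fun x => f (fun i => x (Fin.castAdd l i)) *
        g (fun j => x (Fin.natAdd k j))⟩
    = ⟨k + l, fun x => (htransFn O ⟨k, f⟩).2 (fun i => x (Fin.castAdd l i)) *
        (htransFn O ⟨l, g⟩).2 (fun j => x (Fin.natAdd k j))⟩ := by
  simp only [htransFn]
  congr 1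
  funext x
  rw [← Fintype.sum_equiv (Fin.appendEquiv k l)
    (fun wz => (f wz.1 * g wz.2) *
      ((∏ i, O (x (Fin.castAdd l i)) (wz.1 i)) * ∏ i, O (x (Fin.natAdd k i)) (wz.2 i)))
    _ ?_]
  · rw [Finset.sum_mul_sum, Fintype.sum_prod_type]
    apply Finset.sum_congr rfl; intro w _
    apply Finset.sum_congr rfl; intro z _
    ring
  · rintro ⟨w, z⟩
    simp only [Fin.appendEquiv_apply, Fin.append_left, Fin.append_right]
    rw [Fin.prod_univ_add]
    simp only [Fin.append_left, Fin.append_right]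

lemma ht_perm (O : Bool → Bool → ℂ) {k : ℕ} (f : (Fin k → Bool) → ℂ)
    (π : Equiv.Perm (Fin k)) :
    htransFn O ⟨k, fun x => f (fun i => x (π i))⟩
    = ⟨k, fun x => (htransFn O ⟨k, f⟩).2 (fun i => x (π i))⟩ := by
  simp only [htransFn]
  congr 1
  funext x
  apply Fintype.sum_equiv (Equiv.arrowCongr π.symm (Equiv.refl Bool))
  intro z
  have h1 : (Equiv.arrowCongr π.symm (Equiv.refl Bool)) z = fun i => z (π i) := by
    funext i; simp [Equiv.arrowCongr]
  rw [h1]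
  congr 1
  exact (Equiv.prod_comp π (fun j => O (x j) (z j))).symm

lemma ht_contract (O : Bool → Bool → ℂ)
    (hO : ∀ a b : Bool, (∑ y : Bool, O y a * O y b) = if a = b then 1 else 0)
    {k : ℕ} (f : (Fin (k + 2) → Bool) → ℂ) :
    htransFn O ⟨k, fun x => ∑ y : Bool, f (Fin.snoc (Fin.snoc x y) y)⟩
    = ⟨k, fun x => ∑ y : Bool, (htransFn O ⟨k + 2, f⟩).2 (Fin.snoc (Fin.snoc x y) y)⟩ := by
  simp only [htransFn]
  congr 1
  funext x
  -- RHS: swap order, split the product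
  have rhs_eq : (∑ y : Bool, ∑ z : Fin (k + 2) → Bool,
      f z * ∏ j, O ((Fin.snoc (Fin.snoc x y) y : Fin (k + 2) → Bool) j) (z j))
      = ∑ z : Fin (k + 2) → Bool, f z * ((∏ i : Fin k, O (x i) (z i.castSucc.castSucc)) *
          if z (Fin.last (k+1)) = z ((Fin.last k).castSucc) then 1 else 0) := by
    rw [Finset.sum_comm]
    apply Finset.sum_congr rfl; intro z _
    rw [← Finset.mul_sum]
    congr 1
    rw [← hO (z (Fin.last (k+1))) (z ((Fin.last k).castSucc)), Finset.mul_sum]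
    apply Finset.sum_congr rfl; intro y _
    rw [Fin.prod_univ_castSucc, Fin.prod_univ_castSucc]
    simp only [Fin.snoc_castSucc, Fin.snoc_last]
    ring
  rw [rhs_eq]
  -- reindex z by double snoc
  rw [← Fintype.sum_equiv ((Equiv.prodCongr (eSnoc k) (Equiv.refl Bool)).trans (eSnoc (k+1)))
    (fun wab : ((Fin k → Bool) × Bool) × Bool =>
      f (Fin.snoc (Fin.snoc wab.1.1 wab.1.2) wab.2) *
        ((∏ i : Fin k, O (x i) (wab.1.1 i)) * if wab.2 = wab.1.2 then 1 else 0)) _ ?_]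
  · rw [Fintype.sum_prod_type, Fintype.sum_prod_type]
    apply Finset.sum_congr rfl; intro w _
    rw [Finset.sum_mul]
    apply Finset.sum_congr rfl; intro a _
    rw [Fintype.sum_eq_single a (fun b hb => by simp [if_neg hb])]
    simp [mul_comm, mul_assoc, mul_left_comm]
  · rintro ⟨⟨w, a⟩, b⟩
    simp only [Equiv.trans_apply, Equiv.prodCongr_apply, Equiv.refl_apply, Prod.map]
    simp only [eSnoc, Equiv.coe_fn_mk]
    show _ = f (Fin.snoc (Fin.snoc w a) b : Fin (k+2) → Bool) *
      ((∏ i : Fin k, O (x i) ((Fin.snoc (Fin.snoc w a) b : Fin (k+2) → Bool) i.castSucc.castSucc)) *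
        if (Fin.snoc (Fin.snoc w a) b : Fin (k+2) → Bool) (Fin.last (k+1)) =
          (Fin.snoc (Fin.snoc w a) b : Fin (k+2) → Bool) (Fin.last k).castSucc then 1 else 0)
    simp [Fin.snoc_castSucc, Fin.snoc_last]

lemma hclone_ht (O : Bool → Bool → ℂ)
    (hO : ∀ a b : Bool, (∑ y : Bool, O y a * O y b) = if a = b then 1 else 0)
    (F : Set Fn) {p : Fn} (h : HClone F p) :
    HClone (htransFn O '' F) (htransFn O p) := by
  induction h with
  | base hf => exact .base ⟨_, hf, rfl⟩
  | tensor h1 h2 ih1 ih2 => rw [ht_tensor]; exact .tensor ih1 ih2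
  | perm π h ih => rw [ht_perm]; exact .perm π ih
  | contract h ih => rw [ht_contract O hO]; exact .contract ih

lemma ht_ht (O : Bool → Bool → ℂ)
    (hO : ∀ a b : Bool, (∑ y : Bool, O y a * O y b) = if a = b then 1 else 0)
    (p : Fn) : htransFn (fun a b => O b a) (htransFn O p) = p := by
  obtain ⟨n, f⟩ := p
  simp only [htransFn]
  congr 1
  funext x
  simp only [Finset.sum_mul]
  rw [Finset.sum_comm]
  have : ∀ w : Fin n → Bool,
      (∑ z : Fin n → Bool, (f w * ∏ j, O (z j) (w j)) * ∏ j, O (z j) (x j))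
      = f w * if w = x then 1 else 0 := by
    intro w
    have : (∑ z : Fin n → Bool, ∏ j, (O (z j) (w j) * O (z j) (x j)))
        = ∏ j, ∑ y : Bool, O y (w j) * O y (x j) := by
      rw [Fintype.prod_sum (fun j y => O y (w j) * O y (x j))]
    calc (∑ z : Fin n → Bool, (f w * ∏ j, O (z j) (w j)) * ∏ j, O (z j) (x j))
        = f w * ∑ z : Fin n → Bool, ∏ j, (O (z j) (w j) * O (z j) (x j)) := by
          rw [Finset.mul_sum]
          apply Finset.sum_congr rfl; intro z _
          rw [mul_assoc, ← Finset.prod_mul_distrib]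
      _ = f w * ∏ j, ∑ y : Bool, O y (w j) * O y (x j) := by rw [this]
      _ = f w * if w = x then 1 else 0 := by
          congr 1
          simp only [hO]
          by_cases hwx : w = x
          · simp [hwx]
          · rw [if_neg hwx]
            obtain ⟨j, hj⟩ := Function.ne_iff.mp hwx
            exact Finset.prod_eq_zero (Finset.mem_univ j) (by simp [hj])
  refine (Finset.sum_congr rfl (fun w _ => this w)).trans ?_
  simp [Finset.sum_ite_eq' Finset.univ x f]

theorem holant_clone_orthogonal_holographic (O : Bool → Bool → ℂ)
    (hO : ∀ a b : Bool, (∑ y : Bool, O y a * O y b) = if a = b then 1 else 0)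
    (F : Set Fn) :
    {p : Fn | HClone (htransFn O '' F) p} = htransFn O '' {p : Fn | HClone F p} := by
  have hO' : ∀ a b : Bool, (∑ y : Bool, O a y * O b y) = if a = b then 1 else 0 := by
    have h1 : Matrix.transpose (Matrix.of O) * Matrix.of O = 1 := by
      ext a b
      simp only [Matrix.mul_apply, Matrix.transpose_apply, Matrix.of_apply, Matrix.one_apply]
      exact hO a b
    have h2 : Matrix.of O * Matrix.transpose (Matrix.of O) = 1 := mul_eq_one_comm.mp h1
    intro a b
    have h3 := congrArg (fun M : Matrix Bool Bool ℂ => M a b) h2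
    simpa [Matrix.mul_apply, Matrix.one_apply] using h3
  have hOt : ∀ a b : Bool, (∑ y : Bool, (fun a b => O b a) y a * (fun a b => O b a) y b)
      = if a = b then 1 else 0 := fun a b => hO' a b
  ext p
  simp only [Set.mem_setOf_eq, Set.mem_image]
  constructor
  · intro h
    have h2 := hclone_ht (fun a b => O b a) hOt _ h
    have hset : htransFn (fun a b => O b a) '' (htransFn O '' F) = F := by
      rw [← Set.image_comp]
      have : (htransFn (fun a b => O b a) ∘ htransFn O) = id := by
        funext q; exact ht_ht O hO q
      rw [this, Set.image_id]
    rw [hset] at h2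
    refine ⟨htransFn (fun a b => O b a) p, h2, ?_⟩
    exact ht_ht (fun a b => O b a) hOt p
  · rintro ⟨q, hq, rfl⟩
    exact hclone_ht O hO F hq
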